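/- In ℙ³ with coordinates [x:y:z:t], the quartic surface given by x²yz + y²xz + z²xy + t²yz + t²xz + t⁴ + 2·xyzt = 0 (i.e., the member S_{-2} of the pencil x²yz + y²xz + z²xy + t²xz + t²yz + t⁴ = λxyzt at λ = -2 in family №2.32) is irreducible, or more precisely: the quartic form x²yz + xy²z + xyz² + t²xz + t²yz + t⁴ - λxyzt is irreducible over ℂ for all λ ∈ ℂ. -/

import Mathlib

section ThetaSection
open MvPolynomial

/-! ### Auxiliary: a degree-tracking algebra map -/

noncomputable def auxTheta {σ : Type*} {R : Type*} [CommRing R] :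
    MvPolynomial σ R →ₐ[R] Polynomial (MvPolynomial σ R) :=
  MvPolynomial.aeval (fun i => Polynomial.C (MvPolynomial.X i) * Polynomial.X)

theorem auxTheta_monomial {σ : Type*} {R : Type*} [CommRing R] (s : σ →₀ ℕ) (c : R) :
    auxTheta (monomial s c)
      = Polynomial.C (monomial s c) * Polynomial.X ^ (s.sum fun _ e => e) := by
  rw [auxTheta, MvPolynomial.monomial_eq]
  simp only [map_mul, MvPolynomial.aeval_C]
  rw [Finsupp.prod, map_prod]
  simp only [map_pow, MvPolynomial.aeval_X]
  rw [Finset.prod_congr rfl (fun i _ => mul_pow (Polynomial.C (X i)) Polynomial.X (s i))]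
  rw [Finset.prod_mul_distrib]
  simp only [← map_pow, ← map_prod, Finset.prod_pow_eq_pow_sum]
  have h : (algebraMap R (Polynomial (MvPolynomial σ R))) c = Polynomial.C (MvPolynomial.C c) :=
    rfl
  rw [h, Finsupp.sum, mul_assoc]

theorem auxTheta_coeff {σ : Type*} {R : Type*} [CommRing R] (p : MvPolynomial σ R) (n : ℕ) :
    (auxTheta p).coeff n = homogeneousComponent n p := by
  induction p using MvPolynomial.induction_on' with
  | add p q hp hq => simp [map_add, hp, hq]
  | monomial s c =>
      rw [auxTheta_monomial, Polynomial.coeff_C_mul, Polynomial.coeff_X_pow]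
      rw [homogeneousComponent_of_mem
        (isHomogeneous_monomial (n := s.sum fun _ e => e) c (by rw [Finsupp.degree, Finsupp.sum]; rfl))]
      by_cases h : n = (s.sum fun _ e => e)
      · rw [if_pos h, if_pos h, mul_one]
      · rw [if_neg h, if_neg h, mul_zero]

theorem auxTheta_natDegree {σ : Type*} {R : Type*} [CommRing R] (p : MvPolynomial σ R) :
    (auxTheta p).natDegree = p.totalDegree := by
  apply le_antisymm
  · rw [Polynomial.natDegree_le_iff_coeff_eq_zero]
    intro N hN
    rw [auxTheta_coeff]
    exact homogeneousComponent_eq_zero _ _ hN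
  · by_cases hp : p = 0
    · simp [hp]
    obtain ⟨s, hs, hsup⟩ := Finset.exists_mem_eq_sup p.support
      (MvPolynomial.support_nonempty.mpr hp) (fun s => s.sum fun _ e => e)
    apply Polynomial.le_natDegree_of_ne_zero
    rw [auxTheta_coeff]
    intro h0
    have hcc := coeff_homogeneousComponent (φ := p) (n := p.totalDegree) s
    rw [h0] at hcc
    simp only [MvPolynomial.coeff_zero] at hcc
    rw [if_pos] at hcc
    · exact (MvPolynomial.mem_support_iff.mp hs) hcc.symm
    · rw [Finsupp.degree, MvPolynomial.totalDegree, hsup, Finsupp.sum]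
      rfl

theorem auxTheta_ne_zero {σ : Type*} {R : Type*} [CommRing R] {p : MvPolynomial σ R}
    (hp : p ≠ 0) : auxTheta p ≠ 0 := by
  intro h
  apply hp
  rw [← sum_homogeneousComponent p]
  apply Finset.sum_eq_zero
  intro i _
  rw [← auxTheta_coeff, h, Polynomial.coeff_zero]

theorem aux_totalDegree_mul_eq {σ : Type*} {R : Type*} [CommRing R] [IsDomain R]
    {p q : MvPolynomial σ R} (hp : p ≠ 0) (hq : q ≠ 0) :
    (p * q).totalDegree = p.totalDegree + q.totalDegree := by
  have h1 := auxTheta_ne_zero hp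
  have h2 := auxTheta_ne_zero hq
  rw [← auxTheta_natDegree, ← auxTheta_natDegree, ← auxTheta_natDegree, map_mul,
    Polynomial.natDegree_mul h1 h2]

theorem aux_eq_C_of_totalDegree_eq_zero {σ : Type*} {R : Type*} [CommRing R]
    {p : MvPolynomial σ R} (hp : p.totalDegree = 0) : p = C (coeff 0 p) := by
  classical
  ext m
  by_cases hm : m = 0
  · subst hm; simp
  · rw [MvPolynomial.coeff_C, if_neg (fun h => hm h.symm)]
    by_cases hsup : m ∈ p.support
    · exfalso
      apply hm
      ext x
      exact (MvPolynomial.totalDegree_eq_zero_iff σ p).mp hp m hsup x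
    · exact MvPolynomial.notMem_support_iff.mp hsup

/-! ### Degree bound for linear specializations -/

theorem aux_natDegree_aeval_le {σ : Type*} [Fintype σ] {S : Type*} [CommRing S] [Algebra ℂ S]
    (f : σ → Polynomial S) (hf : ∀ i, (f i).natDegree ≤ 1) (p : MvPolynomial σ ℂ) :
    (MvPolynomial.aeval f p : Polynomial S).natDegree ≤ p.totalDegree := by
  rw [MvPolynomial.aeval_def, MvPolynomial.eval₂_eq]
  apply (Polynomial.natDegree_sum_le _ _).trans
  rw [Finset.fold_max_le]
  refine ⟨Nat.zero_le _, fun d hd => ?_⟩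
  simp only [Function.comp_apply]
  apply (Polynomial.natDegree_mul_le).trans
  have h1 : ((algebraMap ℂ (Polynomial S)) (MvPolynomial.coeff d p)).natDegree = 0 := by
    rw [Polynomial.algebraMap_apply]; exact Polynomial.natDegree_C _
  rw [h1, zero_add]
  apply (Polynomial.natDegree_prod_le _ _).trans
  calc ∑ i ∈ d.support, ((f i) ^ d i).natDegree
      ≤ ∑ i ∈ d.support, d i * 1 := by
        refine Finset.sum_le_sum fun i _ =>
          (Polynomial.natDegree_pow_le).trans (Nat.mul_le_mul_left _ (hf i))
    _ = d.sum fun _ e => e := by simp [Finsupp.sum]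
    _ ≤ p.totalDegree := MvPolynomial.le_totalDegree hd

end ThetaSection

section PolySection
open Polynomial

/-! ### The discriminant is not a square -/

theorem aux_disc_not_square (l : ℂ) (s : Polynomial ℂ)
    (h : s ^ 2 = Polynomial.C (-3) * Polynomial.X ^ 4 + Polynomial.C (-2 * l) * Polynomial.X ^ 3
      + Polynomial.C (l ^ 2) * Polynomial.X ^ 2 + Polynomial.C (-4 * l) * Polynomial.X
      + Polynomial.C 4) : False := by
  have hDdeg : (C (-3) * X ^ 4 + C (-2 * l) * X ^ 3 + C (l ^ 2) * X ^ 2 + C (-4 * l) * X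
      + C (4:ℂ)).natDegree = 4 := by
    compute_degree!
  have hD0 : (C (-3) * X ^ 4 + C (-2 * l) * X ^ 3 + C (l ^ 2) * X ^ 2 + C (-4 * l) * X
      + C (4:ℂ)) ≠ 0 := fun h0 => by rw [h0] at hDdeg; simp at hDdeg
  have hs0 : s ≠ 0 := fun h0 => hD0 (by rw [← h, h0]; ring)
  have hsdeg : s.natDegree = 2 := by
    have h2 := Polynomial.natDegree_pow s 2
    rw [h, hDdeg] at h2
    omega
  set a := s.coeff 2 with hadef
  set b := s.coeff 1 with hbdef
  set c := s.coeff 0 with hcdef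
  have hs_eq : s = C a * X ^ 2 + C b * X + C c := by
    ext n
    rcases n with _ | _ | _ | n
    · simp [hcdef]
    · simp [hbdef]
    · simp [hadef]
    · rw [Polynomial.coeff_eq_zero_of_natDegree_lt (by omega : s.natDegree < n + 3)]
      simp [Polynomial.coeff_X_pow]
  have hexp : s ^ 2 = C (a ^ 2) * X ^ 4 + C (2 * a * b) * X ^ 3 + C (2 * a * c + b ^ 2) * X ^ 2
      + C (2 * b * c) * X + C (c ^ 2) := by
    rw [hs_eq]
    simp only [map_mul, map_add, map_pow, map_ofNat]
    ring
  rw [hexp] at h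
  have key : ∀ k : ℕ, (C (a ^ 2) * X ^ 4 + C (2 * a * b) * X ^ 3 + C (2 * a * c + b ^ 2) * X ^ 2
      + C (2 * b * c) * X + C (c ^ 2)).coeff k
      = (C (-3) * X ^ 4 + C (-2 * l) * X ^ 3 + C (l ^ 2) * X ^ 2 + C (-4 * l) * X
        + C (4:ℂ)).coeff k := fun k => by rw [h]
  have e4 := key 4
  have e3 := key 3
  have e2 := key 2
  have e1 := key 1
  have e0 := key 0
  simp only [coeff_add, coeff_C_mul, coeff_X_pow, coeff_C, coeff_X, mul_ite, mul_one, mul_zero,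
    if_true, if_false] at e4 e3 e2 e1 e0
  norm_num at e4 e3 e2 e1 e0
  have ha : a ≠ 0 := fun h0 => by rw [h0] at e4; norm_num at e4
  have hbc : b * (c - 2 * a) = 0 := by linear_combination e1 / 2 - e3
  rcases mul_eq_zero.mp hbc with hb | hc
  · have hl : l = 0 := by
      have h' : -(2*l) = 0 := by rw [← e3, hb]; ring
      linear_combination - h' / 2
    have hc0 : c = 0 := by
      have h2 := e2
      rw [hb, hl] at h2
      have hac : a * c = 0 := by linear_combination h2 / 2
      rcases mul_eq_zero.mp hac with h' | h'
      · exact absurd h' ha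
      · exact h'
    rw [hc0] at e0
    norm_num at e0
  · have hc2 : c = 2 * a := by linear_combination hc
    rw [hc2] at e0
    have h1 : a ^ 2 = 1 := by linear_combination e0 / 4
    rw [e4] at h1
    norm_num at h1

/-! ### Irreducibility of the specialized quadratic -/

theorem aux_quad_irred (l : ℂ) :
    Irreducible ((Polynomial.X : Polynomial (Polynomial ℂ)) ^ 2
      + Polynomial.C (Polynomial.X ^ 2 - Polynomial.C l * Polynomial.X + 2) * Polynomial.X
      + Polynomial.C (Polynomial.X ^ 4 + Polynomial.X ^ 2)) := by
  set c₁ : Polynomial ℂ := X ^ 2 - C l * X + 2 with hc1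
  set c₀ : Polynomial ℂ := X ^ 4 + X ^ 2 with hc0
  set p2 : Polynomial (Polynomial ℂ) := X ^ 2 + C c₁ * X + C c₀ with hp2
  have hmonic : p2.Monic := by
    have h1 : (C c₁ * X + C c₀).degree < ((2 : ℕ) : WithBot ℕ) :=
      lt_of_le_of_lt Polynomial.degree_linear_le (by norm_num)
    simpa [hp2, add_assoc] using Polynomial.monic_X_pow_add (n := 2) h1
  have hdeg : p2.natDegree = 2 := by
    rw [hp2]; compute_degree!
  constructor
  · exact fun hu => by
      have := Polynomial.natDegree_eq_zero_of_isUnit hu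
      omega
  intro A B hAB
  by_contra hcon
  push_neg at hcon
  obtain ⟨hA, hB⟩ := hcon
  have hp2ne : p2 ≠ 0 := hmonic.ne_zero
  have hAne : A ≠ 0 := fun h0 => hp2ne (by rw [hAB, h0, zero_mul])
  have hBne : B ≠ 0 := fun h0 => hp2ne (by rw [hAB, h0, mul_zero])
  have hdegs : A.natDegree + B.natDegree = 2 := by
    rw [← Polynomial.natDegree_mul hAne hBne, ← hAB, hdeg]
  have hlead : A.leadingCoeff * B.leadingCoeff = 1 := by
    have hm := hmonic
    rw [Polynomial.Monic, hAB, Polynomial.leadingCoeff_mul] at hm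
    exact hm
  have hAdeg : A.natDegree = 1 := by
    rcases Nat.lt_or_ge A.natDegree 1 with h1 | h1
    · exfalso
      apply hA
      interval_cases hA' : A.natDegree
      rw [Polynomial.eq_C_of_natDegree_eq_zero hA']
      apply Polynomial.isUnit_C.mpr
      apply IsUnit.of_mul_eq_one B.leadingCoeff
      rw [← hlead]
      congr 1
      rw [Polynomial.leadingCoeff, hA']
    rcases Nat.lt_or_ge B.natDegree 1 with h2 | h2
    · exfalso
      apply hB
      interval_cases hB' : B.natDegree
      rw [Polynomial.eq_C_of_natDegree_eq_zero hB']
      apply Polynomial.isUnit_C.mpr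
      apply IsUnit.of_mul_eq_one A.leadingCoeff
      rw [mul_comm] at hlead
      rw [← hlead]
      congr 1
      rw [Polynomial.leadingCoeff, hB']
    omega
  have hAform : A = C (A.coeff 1) * X + C (A.coeff 0) :=
    Polynomial.eq_X_add_C_of_degree_le_one
      (Polynomial.degree_le_of_natDegree_le (n := 1) hAdeg.le)
  set a := A.coeff 1
  set b := A.coeff 0
  have haunit : IsUnit a := by
    apply IsUnit.of_mul_eq_one B.leadingCoeff
    rw [← hlead]
    congr 1
    rw [Polynomial.leadingCoeff, hAdeg]
  obtain ⟨a', ha'⟩ := haunit.exists_right_inv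
  set r : Polynomial ℂ := -b * a' with hr
  have hAr : A.eval r = 0 := by
    rw [hAform]
    simp only [eval_add, eval_mul, eval_C, eval_X, hr]
    ring_nf
    linear_combination (-b) * ha'
  have hroot : r ^ 2 + c₁ * r + c₀ = 0 := by
    have hev : p2.eval r = 0 := by
      rw [hAB, Polynomial.eval_mul, hAr, zero_mul]
    simpa [hp2] using hev
  apply aux_disc_not_square l (2 * r + c₁)
  have hsq : (2 * r + c₁) ^ 2 = c₁ ^ 2 - 4 * c₀ := by linear_combination 4 * hroot
  rw [hsq, hc1, hc0]
  simp only [map_neg, map_mul, map_add, map_pow, map_ofNat]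
  ring

end PolySection

open MvPolynomial

/-! ### The two specialization maps -/

noncomputable def auxPhi : MvPolynomial (Fin 4) ℂ →ₐ[ℂ] Polynomial (Polynomial ℂ) :=
  MvPolynomial.aeval ![Polynomial.X, 1, 1, Polynomial.C Polynomial.X]

noncomputable def auxChi : MvPolynomial (Fin 4) ℂ →ₐ[ℂ] Polynomial ℂ :=
  MvPolynomial.aeval ![Polynomial.X, 1, 1, Polynomial.X]

theorem auxPhi_eval (p : MvPolynomial (Fin 4) ℂ) :
    (auxPhi p).eval Polynomial.X = auxChi p := by
  have h : (Polynomial.evalRingHom (Polynomial.X : Polynomial ℂ)).comp auxPhi.toRingHom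
      = auxChi.toRingHom := by
    apply MvPolynomial.ringHom_ext
    · intro r
      simp [auxPhi, auxChi]
    · intro i
      fin_cases i <;> simp [auxPhi, auxChi]
  exact RingHom.congr_fun h p

/-- The quartic form `x²yz + xy²z + xyz² + t²xz + t²yz + t⁴ - λxyzt` (the member `S_λ` of
the pencil of family №2.32) is irreducible over `ℂ` for every `λ ∈ ℂ`. -/
theorem stmt_12 :
    ∀ l : ℂ, Irreducible
      ((X 0 ^ 2 * X 1 * X 2 + X 0 * X 1 ^ 2 * X 2 + X 0 * X 1 * X 2 ^ 2 +
        X 3 ^ 2 * X 0 * X 2 + X 3 ^ 2 * X 1 * X 2 + X 3 ^ 4 -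
        C l * (X 0 * X 1 * X 2 * X 3) : MvPolynomial (Fin 4) ℂ)) := by
  intro l
  set P : MvPolynomial (Fin 4) ℂ :=
    X 0 ^ 2 * X 1 * X 2 + X 0 * X 1 ^ 2 * X 2 + X 0 * X 1 * X 2 ^ 2 +
      X 3 ^ 2 * X 0 * X 2 + X 3 ^ 2 * X 1 * X 2 + X 3 ^ 4 -
      C l * (X 0 * X 1 * X 2 * X 3) with hP
  -- the image under Φ
  have hPhiP : auxPhi P = Polynomial.X ^ 2
      + Polynomial.C (Polynomial.X ^ 2 - Polynomial.C l * Polynomial.X + 2) * Polynomial.X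
      + Polynomial.C (Polynomial.X ^ 4 + Polynomial.X ^ 2) := by
    rw [hP]
    simp only [auxPhi, map_sub, map_add, map_mul, map_pow, aeval_X, aeval_C,
      Matrix.cons_val_zero, Matrix.cons_val_one, Matrix.head_cons, Matrix.cons_val_two,
      Matrix.tail_cons, Matrix.cons_val_three, Matrix.cons_val_fin_one]
    simp only [Polynomial.algebraMap_apply, Polynomial.algebraMap_eq]
    simp only [map_sub, map_add, map_mul, map_pow, map_ofNat]
    ring
  -- the image under χ
  have hChiP : auxChi P = Polynomial.X ^ 4 + Polynomial.X ^ 3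
      + Polynomial.C (2 - l) * Polynomial.X ^ 2 + 2 * Polynomial.X := by
    rw [hP]
    simp only [auxChi, map_sub, map_add, map_mul, map_pow, aeval_X, aeval_C,
      Matrix.cons_val_zero, Matrix.cons_val_one, Matrix.head_cons, Matrix.cons_val_two,
      Matrix.tail_cons, Matrix.cons_val_three, Matrix.cons_val_fin_one]
    simp only [Polynomial.algebraMap_apply, Polynomial.algebraMap_eq, map_sub, map_ofNat]
    ring
  have hChiPdeg : (auxChi P).natDegree = 4 := by
    rw [hChiP]; compute_degree!
  have hChiPne : auxChi P ≠ 0 := fun h0 => by rw [h0] at hChiPdeg; simp at hChiPdeg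
  have hPne : P ≠ 0 := fun h0 => hChiPne (by rw [h0, map_zero])
  -- P is homogeneous of degree 4, so totalDegree P ≤ 4
  have hPhom : P.IsHomogeneous 4 := by
    rw [hP]
    apply MvPolynomial.IsHomogeneous.sub
    · apply MvPolynomial.IsHomogeneous.add
      apply MvPolynomial.IsHomogeneous.add
      apply MvPolynomial.IsHomogeneous.add
      apply MvPolynomial.IsHomogeneous.add
      apply MvPolynomial.IsHomogeneous.add
      · exact (((MvPolynomial.isHomogeneous_X ℂ 0).pow 2).mul
          (MvPolynomial.isHomogeneous_X ℂ 1)).mul (MvPolynomial.isHomogeneous_X ℂ 2)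
      · exact ((MvPolynomial.isHomogeneous_X ℂ 0).mul
          ((MvPolynomial.isHomogeneous_X ℂ 1).pow 2)).mul (MvPolynomial.isHomogeneous_X ℂ 2)
      · exact ((MvPolynomial.isHomogeneous_X ℂ 0).mul
          (MvPolynomial.isHomogeneous_X ℂ 1)).mul ((MvPolynomial.isHomogeneous_X ℂ 2).pow 2)
      · exact (((MvPolynomial.isHomogeneous_X ℂ 3).pow 2).mul
          (MvPolynomial.isHomogeneous_X ℂ 0)).mul (MvPolynomial.isHomogeneous_X ℂ 2)
      · exact (((MvPolynomial.isHomogeneous_X ℂ 3).pow 2).mul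
          (MvPolynomial.isHomogeneous_X ℂ 1)).mul (MvPolynomial.isHomogeneous_X ℂ 2)
      · exact (MvPolynomial.isHomogeneous_X ℂ 3).pow 4
    · exact MvPolynomial.IsHomogeneous.C_mul
        ((((MvPolynomial.isHomogeneous_X ℂ 0).mul (MvPolynomial.isHomogeneous_X ℂ 1)).mul
          (MvPolynomial.isHomogeneous_X ℂ 2)).mul (MvPolynomial.isHomogeneous_X ℂ 3)) l
  have hPdeg_le : P.totalDegree ≤ 4 := hPhom.totalDegree_le
  -- key step: a factor with unit Φ-image is a unit
  have key : ∀ Q R : MvPolynomial (Fin 4) ℂ, P = Q * R → IsUnit (auxPhi Q) → IsUnit Q := by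
    intro Q R hQR hu
    have hQne : Q ≠ 0 := fun h0 => hPne (by rw [hQR, h0, zero_mul])
    have hRne : R ≠ 0 := fun h0 => hPne (by rw [hQR, h0, mul_zero])
    have hchiQ : IsUnit (auxChi Q) := by
      rw [← auxPhi_eval]
      exact hu.map (Polynomial.evalRingHom (Polynomial.X : Polynomial ℂ))
    have hchiQdeg : (auxChi Q).natDegree = 0 := Polynomial.natDegree_eq_zero_of_isUnit hchiQ
    have hmul : auxChi Q * auxChi R = auxChi P := by rw [← map_mul, ← hQR]
    have hchiQne : auxChi Q ≠ 0 := hchiQ.ne_zero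
    have hchiRne : auxChi R ≠ 0 := fun h0 => hChiPne (by rw [← hmul, h0, mul_zero])
    have hsum : (auxChi Q).natDegree + (auxChi R).natDegree = 4 := by
      rw [← Polynomial.natDegree_mul hchiQne hchiRne, hmul, hChiPdeg]
    have hchiRdeg : (auxChi R).natDegree = 4 := by omega
    have hRdeg : 4 ≤ R.totalDegree := by
      have hle : (auxChi R).natDegree ≤ R.totalDegree :=
        aux_natDegree_aeval_le _ (fun i => by
          fin_cases i <;>
            simp [Polynomial.natDegree_X, Polynomial.natDegree_one]) R
      omega
    have htot : Q.totalDegree + R.totalDegree ≤ 4 := by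
      rw [← aux_totalDegree_mul_eq hQne hRne, ← hQR]
      exact hPdeg_le
    have hQdeg : Q.totalDegree = 0 := by omega
    rw [aux_eq_C_of_totalDegree_eq_zero hQdeg]
    refine IsUnit.map (MvPolynomial.C : ℂ →+* MvPolynomial (Fin 4) ℂ) (isUnit_iff_ne_zero.mpr ?_)
    intro h0
    apply hQne
    rw [aux_eq_C_of_totalDegree_eq_zero hQdeg, h0, map_zero]
  constructor
  · intro hu
    have := Polynomial.natDegree_eq_zero_of_isUnit (hu.map auxChi)
    omega
  · intro Q R hQR
    have hfac : (Polynomial.X : Polynomial (Polynomial ℂ)) ^ 2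
        + Polynomial.C (Polynomial.X ^ 2 - Polynomial.C l * Polynomial.X + 2) * Polynomial.X
        + Polynomial.C (Polynomial.X ^ 4 + Polynomial.X ^ 2) = auxPhi Q * auxPhi R := by
      rw [← map_mul, ← hQR, hPhiP]
    rcases (aux_quad_irred l).isUnit_or_isUnit hfac with hu | hu
    · exact Or.inl (key Q R hQR hu)
    · exact Or.inr (key R Q (by rw [hQR, mul_comm]) hu)
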